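/- Let w ∈ ℝⁿ be a random vector with i.i.d. N(0, σ²) entries and let X ∈ ℝ^{n×s} have all columns of Euclidean norm exactly √n, with s < n. Then for any M ≥ 1, with probability at least 1 − e^{−Ms}, (1/n)·‖Xᵀw‖ ≤ 3σ·√(Ms·λ_max(XᵀX/n)/n), where λ_max denotes the largest eigenvalue. -/

import Mathlib

open MeasureTheory ProbabilityTheory Matrix Filter Topology

noncomputable section

/-- Hadamard (entrywise) product of two vectors. -/
def had {p : ℕ} (u v : Fin p → ℝ) : Fin p → ℝ := fun j => u j * v j

/-- Euclidean norm of a vector. -/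
def nrm2 {p : ℕ} (v : Fin p → ℝ) : ℝ := Real.sqrt (∑ j, (v j) ^ 2)

/-- ℓ1 norm of a vector. -/
def nrm1 {p : ℕ} (v : Fin p → ℝ) : ℝ := ∑ j, |v j|

/-- Sup norm of a vector. -/
def nrmInf {p : ℕ} (v : Fin p → ℝ) : ℝ := ⨆ j, |v j|

/-- A vector is `s`-sparse if it has at most `s` nonzero entries. -/
def Sparse {p : ℕ} (s : ℕ) (v : Fin p → ℝ) : Prop := {j | v j ≠ 0}.ncard ≤ s

/-- The `(s, δ)`-Restricted Isometry Property:
`(1−δ)‖u‖² ≤ n⁻¹‖Xu‖² ≤ (1+δ)‖u‖²` for all `s`-sparse `u`. -/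
def RIP {n p : ℕ} (X : Matrix (Fin n) (Fin p) ℝ) (s : ℕ) (δ : ℝ) : Prop :=
  ∀ u : Fin p → ℝ, Sparse s u →
    (1 - δ) * nrm2 u ^ 2 ≤ (n : ℝ)⁻¹ * nrm2 (X.mulVec u) ^ 2 ∧
      (n : ℝ)⁻¹ * nrm2 (X.mulVec u) ^ 2 ≤ (1 + δ) * nrm2 u ^ 2

/-- Law of a random vector in ℝⁿ with i.i.d. `N(0, σ²)` entries. -/
def noiseMeasure (n : ℕ) (σ : ℝ) : Measure (Fin n → ℝ) :=
  Measure.pi fun _ => gaussianReal 0 (σ ^ 2).toNNReal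

/-- Largest eigenvalue of a symmetric matrix, as the supremum of its quadratic form
over Euclidean unit vectors. -/
def lamMax {s : ℕ} (A : Matrix (Fin s) (Fin s) ℝ) : ℝ :=
  sSup {r : ℝ | ∃ v : Fin s → ℝ, nrm2 v = 1 ∧ r = ∑ i, v i * A.mulVec v i}

open Real
open scoped ENNReal NNReal

lemma lintegral_pi_prod {k : ℕ} (μ : Measure ℝ) [SigmaFinite μ] (f : Fin k → ℝ → ℝ≥0∞)
    (hf : ∀ i, Measurable (f i)) :
    ∫⁻ x, ∏ i, f i (x i) ∂Measure.pi (fun _ : Fin k => μ) = ∏ i, ∫⁻ x, f i x ∂μ := by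
  induction k with
  | zero => simp [Measure.pi_univ]
  | succ k ih =>
    have h := (measurePreserving_piFinSuccAbove (fun _ : Fin (k+1) => μ) 0).symm
    rw [← h.lintegral_comp_emb (MeasurableEquiv.measurableEmbedding _)
      (fun x => ∏ i, f i (x i))]
    have heq : ∀ y : ℝ × (Fin k → ℝ),
        (∏ i, f i (((MeasurableEquiv.piFinSuccAbove (fun _ : Fin (k+1) => ℝ) 0).symm y) i))
          = f 0 y.1 * ∏ j : Fin k, f j.succ (y.2 j) := by
      intro y
      simp [MeasurableEquiv.piFinSuccAbove_symm_apply, Fin.insertNthEquiv,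
        Fin.prod_univ_succ]
    simp_rw [heq]
    rw [lintegral_prod_mul (f := f 0) (g := fun b : Fin k → ℝ => ∏ j : Fin k, f j.succ (b j))
      (hf 0).aemeasurable
      (Finset.measurable_prod Finset.univ fun j _ =>
        ((hf j.succ).comp (measurable_pi_apply j))).aemeasurable]
    rw [ih (fun j => f j.succ) (fun j => hf j.succ), Fin.prod_univ_succ]

lemma gauss_moment (v : ℝ≥0) (hv : v ≠ 0) (a b : ℝ) (ha : 2 * a * v < 1) :
    ∫⁻ x, ENNReal.ofReal (rexp (a * x ^ 2 + b * x)) ∂gaussianReal 0 v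
      = ENNReal.ofReal ((Real.sqrt (1 - 2 * a * v))⁻¹
          * rexp ((v:ℝ) * b ^ 2 / (2 * (1 - 2 * a * v)))) := by
  have hv0 : (0:ℝ) < v := lt_of_le_of_ne v.coe_nonneg (by exact_mod_cast (Ne.symm hv))
  have h1 : (0:ℝ) < 1 - 2 * a * v := by linarith
  set p : ℝ := (1 - 2 * a * v) / (2 * v) with hp_def
  have hp : 0 < p := div_pos h1 (by positivity)
  set m : ℝ := b / (2 * p) with hm_def
  set c : ℝ := (Real.sqrt (2 * Real.pi * v))⁻¹ * rexp (b ^ 2 / (4 * p)) with hc_def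
  have hc : 0 ≤ c := by positivity
  rw [gaussianReal_of_var_ne_zero 0 hv,
    lintegral_withDensity_eq_lintegral_mul _ (measurable_gaussianPDF 0 v)
      (by fun_prop)]
  have harg : ∀ x : ℝ, -x^2/(2*(v:ℝ)) + (a*x^2+b*x) = b^2/(4*p) + (-p*(x-m)^2) := by
    intro x
    rw [hm_def]
    field_simp
    rw [hp_def]
    field_simp
    ring
  have hpt : ∀ x : ℝ, (gaussianPDF 0 v * fun x => ENNReal.ofReal (rexp (a * x ^ 2 + b * x))) x
      = ENNReal.ofReal (c * rexp (-p * (x - m) ^ 2)) := by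
    intro x
    simp only [Pi.mul_apply, gaussianPDF, gaussianPDFReal, sub_zero]
    rw [← ENNReal.ofReal_mul (by positivity)]
    congr 1
    rw [hc_def, mul_assoc, ← Real.exp_add, harg x, Real.exp_add, ← mul_assoc]
  simp_rw [hpt]
  have hint : Integrable (fun x : ℝ => c * rexp (-p * (x - m) ^ 2)) := by
    exact ((integrable_exp_neg_mul_sq hp).comp_sub_right m).const_mul c
  rw [← ofReal_integral_eq_lintegral_ofReal hint
    (Filter.Eventually.of_forall fun x => by positivity)]
  congr 1
  rw [MeasureTheory.integral_const_mul]
  rw [integral_sub_right_eq_self (fun x => rexp (-p * x ^ 2)) m, integral_gaussian]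
  rw [hc_def]
  have e1 : b ^ 2 / (4 * p) = (v:ℝ) * b ^ 2 / (2 * (1 - 2 * a * v)) := by
    rw [hp_def]; field_simp; ring_nf
  rw [e1]
  have e2 : (Real.sqrt (2 * Real.pi * v))⁻¹ * Real.sqrt (Real.pi / p)
      = (Real.sqrt (1 - 2 * a * v))⁻¹ := by
    rw [← Real.sqrt_inv, ← Real.sqrt_mul (by positivity)]
    congr 1
    rw [hp_def]
    field_simp
    rw [one_div, one_div, Real.sqrt_inv]
  rw [mul_right_comm, e2]
lemma nrm2_sq {p : ℕ} (v : Fin p → ℝ) : nrm2 v ^ 2 = ∑ j, (v j) ^ 2 :=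
  Real.sq_sqrt (by positivity)


lemma lamMax_bddAbove {s : ℕ} (A : Matrix (Fin s) (Fin s) ℝ) :
    BddAbove {r : ℝ | ∃ v : Fin s → ℝ, nrm2 v = 1 ∧ r = ∑ i, v i * A.mulVec v i} := by
  refine ⟨∑ i, ∑ j, |A i j|, ?_⟩
  rintro r ⟨v, hv1, rfl⟩
  have hv2 : ∑ j, (v j) ^ 2 = 1 := by rw [← nrm2_sq v, hv1, one_pow]
  have hvb : ∀ j, |v j| ≤ 1 := by
    intro j
    have h1 : (v j) ^ 2 ≤ 1 := by
      rw [← hv2]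
      exact Finset.single_le_sum (f := fun j => (v j) ^ 2) (fun _ _ => sq_nonneg _)
        (Finset.mem_univ j)
    nlinarith [abs_nonneg (v j), sq_abs (v j)]
  simp_rw [show ∀ i, v i * A.mulVec v i = ∑ j, v i * (A i j * v j) from fun i => by
    simp only [Matrix.mulVec, dotProduct, Finset.mul_sum]]
  refine Finset.sum_le_sum fun i _ => Finset.sum_le_sum fun j _ => ?_
  refine le_trans (le_abs_self _) ?_
  rw [abs_mul, abs_mul]
  calc |v i| * (|A i j| * |v j|) ≤ 1 * (|A i j| * 1) :=
        mul_le_mul (hvb i) (mul_le_mul_of_nonneg_left (hvb j) (abs_nonneg _))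
          (by positivity) zero_le_one
    _ = |A i j| := by ring

open Real in
lemma gauss_lin (v : ℝ≥0) (hv : v ≠ 0) (b : ℝ) :
    ∫⁻ x, ENNReal.ofReal (rexp (b * x)) ∂gaussianReal 0 v
      = ENNReal.ofReal (rexp ((v:ℝ) * b ^ 2 / 2)) := by
  have h := gauss_moment v hv 0 b (by simp)
  simpa using h

open Real in
lemma gauss_sq : ∫⁻ x, ENNReal.ofReal (rexp (4⁻¹ * x ^ 2)) ∂gaussianReal 0 1
    = ENNReal.ofReal (Real.sqrt 2) := by
  have h := gauss_moment 1 one_ne_zero 4⁻¹ 0 (by norm_num)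
  simp only [NNReal.coe_one] at h
  norm_num at h
  rw [show (4:ℝ)⁻¹ = 1/4 by norm_num]
  exact h


lemma quad_le_lamMax {s : ℕ} (A : Matrix (Fin s) (Fin s) ℝ) (u : Fin s → ℝ) :
    ∑ i, u i * A.mulVec u i ≤ lamMax A * ∑ i, (u i) ^ 2 := by
  have hexp : ∀ v : Fin s → ℝ, ∀ i, v i * A.mulVec v i = ∑ j, v i * (A i j * v j) := by
    intro v i
    simp only [Matrix.mulVec, dotProduct, Finset.mul_sum]
  have hbdd := lamMax_bddAbove A
  rcases eq_or_ne (∑ i, (u i) ^ 2) 0 with h0 | h0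
  · have hz : ∀ i, u i = 0 := by
      intro i
      have h := (Finset.sum_eq_zero_iff_of_nonneg (fun i _ => sq_nonneg (u i))).1 h0 i
        (Finset.mem_univ i)
      exact pow_eq_zero_iff two_ne_zero |>.1 h
    have : ∀ i, u i * A.mulVec u i = 0 := fun i => by rw [hz i, zero_mul]
    rw [Finset.sum_congr rfl fun i _ => this i, h0, Finset.sum_const, mul_zero]
    simp
  · have hpos : 0 < ∑ i, (u i) ^ 2 :=
      lt_of_le_of_ne (by positivity) (Ne.symm h0)
    set r : ℝ := Real.sqrt (∑ i, (u i) ^ 2) with hr_def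
    have hr : 0 < r := Real.sqrt_pos.2 hpos
    have hr2 : r ^ 2 = ∑ i, (u i) ^ 2 := Real.sq_sqrt (le_of_lt hpos)
    set v : Fin s → ℝ := fun i => r⁻¹ * u i with hv_def
    have hvmem : nrm2 v = 1 := by
      rw [nrm2]
      have : ∀ i, (v i) ^ 2 = (r⁻¹) ^ 2 * (u i) ^ 2 := fun i => by rw [hv_def]; ring
      rw [Finset.sum_congr rfl fun i _ => this i, ← Finset.mul_sum, ← hr2]
      rw [Real.sqrt_mul (by positivity), Real.sqrt_sq (le_of_lt hr)]
      rw [show ((r:ℝ)⁻¹) ^ 2 = (r^2)⁻¹ by ring, Real.sqrt_inv, Real.sqrt_sq (le_of_lt hr)]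
      field_simp
    have hquad : ∑ i, v i * A.mulVec v i = (r ^ 2)⁻¹ * ∑ i, u i * A.mulVec u i := by
      have hmv : ∀ i, A.mulVec v i = r⁻¹ * A.mulVec u i := by
        intro i
        simp only [Matrix.mulVec, dotProduct, hv_def, Finset.mul_sum]
        exact Finset.sum_congr rfl fun j _ => by ring
      rw [Finset.mul_sum]
      refine Finset.sum_congr rfl fun i _ => ?_
      rw [hmv i, hv_def]
      ring
    have hle : ∑ i, v i * A.mulVec v i ≤ lamMax A :=
      le_csSup hbdd ⟨v, hvmem, rfl⟩
    rw [hquad] at hle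
    have := mul_le_mul_of_nonneg_left hle (le_of_lt (by positivity : (0:ℝ) < r ^ 2))
    rw [← mul_assoc, mul_inv_cancel₀ (by positivity), one_mul] at this
    calc ∑ i, u i * A.mulVec u i ≤ r ^ 2 * lamMax A := this
      _ = lamMax A * ∑ i, (u i) ^ 2 := by rw [hr2]; ring

lemma one_le_lamMax {n s : ℕ} (hn : 0 < n) (hs : 0 < s) (X : Matrix (Fin n) (Fin s) ℝ)
    (hcol : ∀ j : Fin s, nrm2 (fun i => X i j) = Real.sqrt n) :
    1 ≤ lamMax ((n : ℝ)⁻¹ • (Xᵀ * X)) := by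
  set A := (n : ℝ)⁻¹ • (Xᵀ * X) with hA_def
  set j0 : Fin s := ⟨0, hs⟩
  set e : Fin s → ℝ := fun j => if j = j0 then 1 else 0 with he_def
  have hcolsq : ∑ i, (X i j0) ^ 2 = n := by
    have h := hcol j0
    rw [nrm2] at h
    have := congrArg (· ^ 2) h
    simpa [Real.sq_sqrt (by positivity : (0:ℝ) ≤ ∑ i, (X i j0) ^ 2),
      Real.sq_sqrt (Nat.cast_nonneg n : (0:ℝ) ≤ n)] using this
  have hnrm : nrm2 e = 1 := by
    rw [nrm2]
    have : ∀ j, (e j) ^ 2 = if j = j0 then 1 else 0 := by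
      intro j; rw [he_def]; by_cases h : j = j0 <;> simp [h]
    rw [Finset.sum_congr rfl fun j _ => this j, Finset.sum_ite_eq' Finset.univ j0 (fun _ => (1:ℝ))]
    simp
  have hquad : ∑ i, e i * A.mulVec e i = 1 := by
    have hmv : A.mulVec e j0 = 1 := by
      simp only [hA_def, Matrix.smul_mulVec, Pi.smul_apply, smul_eq_mul]
      rw [Matrix.mulVec, dotProduct]
      rw [Finset.sum_congr rfl (fun j _ => show (Xᵀ * X) j0 j * e j
        = if j = j0 then (Xᵀ * X) j0 j0 else 0 by
          rw [he_def]; by_cases h : j = j0 <;> simp [h]),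
        Finset.sum_ite_eq' Finset.univ j0 (fun j => (Xᵀ * X) j0 j0)]
      simp only [Finset.mem_univ, if_true]
      rw [Matrix.mul_apply]
      simp only [Matrix.transpose_apply]
      rw [Finset.sum_congr rfl (fun i _ => show X i j0 * X i j0 = (X i j0)^2 by ring), hcolsq]
      field_simp
    have : ∀ i, e i * A.mulVec e i = if i = j0 then A.mulVec e j0 else 0 := by
      intro i; rw [he_def]; by_cases h : i = j0 <;> simp [h]
    rw [Finset.sum_congr rfl fun i _ => this i,
      Finset.sum_ite_eq' Finset.univ j0 (fun _ => A.mulVec e j0)]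
    simp [hmv]
  have hbdd := lamMax_bddAbove A
  have := le_csSup hbdd ⟨e, hnrm, hquad.symm⟩
  exact this

lemma sum_mulVec_swap {n s : ℕ} (X : Matrix (Fin n) (Fin s) ℝ) (c : ℝ) (w : Fin n → ℝ)
    (g : Fin s → ℝ) :
    ∑ j, (c * Xᵀ.mulVec w j) * g j = ∑ i, (c * X.mulVec g i) * w i := by
  simp only [Matrix.mulVec, dotProduct, Matrix.transpose_apply, Finset.mul_sum, Finset.sum_mul]
  rw [Finset.sum_comm]
  exact Finset.sum_congr rfl fun i _ => Finset.sum_congr rfl fun j _ => by ring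

lemma sum_sq_mulVec {n s : ℕ} (X : Matrix (Fin n) (Fin s) ℝ) (g : Fin s → ℝ) :
    ∑ i, (X.mulVec g i) ^ 2 = ∑ j, g j * ((Xᵀ * X).mulVec g j) := by
  simp only [Matrix.mulVec, dotProduct, Matrix.mul_apply, Matrix.transpose_apply, pow_two,
    Finset.sum_mul, Finset.mul_sum]
  rw [Finset.sum_comm]
  refine Finset.sum_congr rfl fun j _ => ?_
  rw [Finset.sum_comm]
  exact Finset.sum_congr rfl fun k _ => Finset.sum_congr rfl fun i _ => by ring

lemma Xg_bound {n s : ℕ} (hn : 0 < n) (X : Matrix (Fin n) (Fin s) ℝ) (g : Fin s → ℝ) :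
    ∑ i, (X.mulVec g i) ^ 2
      ≤ (n : ℝ) * lamMax ((n : ℝ)⁻¹ • (Xᵀ * X)) * ∑ j, (g j) ^ 2 := by
  have hnR : (0:ℝ) < n := by exact_mod_cast hn
  rw [sum_sq_mulVec]
  have h1 : ∀ j, (Xᵀ * X).mulVec g j = (n:ℝ) * (((n : ℝ)⁻¹ • (Xᵀ * X)).mulVec g j) := by
    intro j
    rw [Matrix.smul_mulVec]
    simp only [Pi.smul_apply, smul_eq_mul]
    field_simp
  calc ∑ j, g j * ((Xᵀ * X).mulVec g j)
      = (n:ℝ) * ∑ j, g j * (((n : ℝ)⁻¹ • (Xᵀ * X)).mulVec g j) := by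
        rw [Finset.mul_sum]
        exact Finset.sum_congr rfl fun j _ => by rw [h1 j]; ring
    _ ≤ (n:ℝ) * (lamMax ((n : ℝ)⁻¹ • (Xᵀ * X)) * ∑ j, (g j) ^ 2) :=
        mul_le_mul_of_nonneg_left (quad_le_lamMax _ g) hnR.le
    _ = (n : ℝ) * lamMax ((n : ℝ)⁻¹ • (Xᵀ * X)) * ∑ j, (g j) ^ 2 := by ring

lemma noiseMeasure_zero (n : ℕ) : noiseMeasure n 0 = Measure.dirac (0 : Fin n → ℝ) := by
  unfold noiseMeasure
  rw [show ((0:ℝ)^2).toNNReal = 0 by simp]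
  simp_rw [gaussianReal_zero_var]
  refine Measure.pi_eq fun t ht => ?_
  rw [Measure.dirac_apply' _ (MeasurableSet.univ_pi ht)]
  by_cases h : (0 : Fin n → ℝ) ∈ Set.pi Set.univ t
  · rw [Set.indicator_of_mem h]
    rw [Finset.prod_congr rfl fun i _ => show Measure.dirac (0:ℝ) (t i) = 1 by
      rw [Measure.dirac_apply' _ (ht i), Set.indicator_of_mem (show (0:ℝ) ∈ t i from h i (Set.mem_univ i))]; rfl]
    simp
  · rw [Set.indicator_of_notMem h]
    obtain ⟨i, hi⟩ : ∃ i, (0:ℝ) ∉ t i := by simpa [Set.mem_pi] using h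
    exact (Finset.prod_eq_zero (Finset.mem_univ i) (by
      rw [Measure.dirac_apply' _ (ht i), Set.indicator_of_notMem hi])).symm

/-- For `w` with i.i.d. `N(0, σ²)` entries and `X ∈ ℝ^{n×s}` with columns of norm `√n`,
`s < n`, for any `M ≥ 1`, with probability at least `1 − e^{−Ms}`,
`(1/n)‖Xᵀw‖ ≤ 3σ√(Ms·λ_max(XᵀX/n)/n)`. -/
theorem stmt14 (n s : ℕ) (σ : ℝ) (hσ : 0 ≤ σ) (X : Matrix (Fin n) (Fin s) ℝ)
    (hcol : ∀ j : Fin s, nrm2 (fun i => X i j) = Real.sqrt n) (hs : s < n)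
    (M : ℝ) (hM : 1 ≤ M) :
    noiseMeasure n σ
        {w | (n : ℝ)⁻¹ * nrm2 (Xᵀ.mulVec w) ≤
            3 * σ * Real.sqrt (M * (s : ℝ) * lamMax ((n : ℝ)⁻¹ • (Xᵀ * X)) / (n : ℝ))} ≥
      ENNReal.ofReal (1 - Real.exp (-(M * (s : ℝ)))) := by
  rcases Nat.eq_zero_or_pos s with hs0 | hspos
  · subst hs0
    norm_num
  have hn : 0 < n := lt_of_le_of_lt (Nat.zero_le s) hs
  have hnR : (0:ℝ) < n := by exact_mod_cast hn
  set lam : ℝ := lamMax ((n : ℝ)⁻¹ • (Xᵀ * X)) with hlam_def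
  have hlam1 : (1:ℝ) ≤ lam := one_le_lamMax hn hspos X hcol
  have hlam0 : (0:ℝ) < lam := lt_of_lt_of_le one_pos hlam1
  -- measurability facts
  have hYm : ∀ j, Measurable fun w : Fin n → ℝ => Xᵀ.mulVec w j := by
    intro j
    simp only [Matrix.mulVec, dotProduct]
    exact Finset.measurable_sum _ fun i _ => (measurable_pi_apply i).const_mul _
  have hQm : Measurable fun w : Fin n → ℝ => ∑ j, (Xᵀ.mulVec w j) ^ 2 :=
    Finset.measurable_sum _ fun j _ => (hYm j).pow_const 2
  have hMs : (0:ℝ) < M * s := by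
    have : (1:ℝ) ≤ (s:ℝ) := by exact_mod_cast hspos
    nlinarith
  rcases eq_or_lt_of_le hσ with hσ0 | hσpos
  · -- σ = 0 : the measure is a Dirac at 0 and the event contains 0
    subst hσ0
    rw [noiseMeasure_zero n]
    have hE : MeasurableSet {w : Fin n → ℝ | (n : ℝ)⁻¹ * nrm2 (Xᵀ.mulVec w) ≤
        3 * 0 * Real.sqrt (M * (s : ℝ) * lam / (n : ℝ))} := by
      refine measurableSet_le (Measurable.const_mul ?_ _) measurable_const
      exact Real.continuous_sqrt.measurable.comp hQm
    rw [Measure.dirac_apply' _ hE, Set.indicator_of_mem]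
    · exact ENNReal.ofReal_le_one.2 (by nlinarith [Real.exp_pos (-(M * (s:ℝ)))])
    · show (n : ℝ)⁻¹ * nrm2 (Xᵀ.mulVec 0) ≤ _
      rw [Matrix.mulVec_zero]
      have : nrm2 (0 : Fin s → ℝ) = 0 := by simp [nrm2]
      rw [this, mul_zero]
      positivity
  -- main case : σ > 0
  haveI hP : IsProbabilityMeasure (noiseMeasure n σ) := by
    unfold noiseMeasure; infer_instance
  haveI hPs : IsProbabilityMeasure (noiseMeasure s 1) := by
    unfold noiseMeasure; infer_instance
  have hν : noiseMeasure s 1 = Measure.pi (fun _ : Fin s => gaussianReal 0 1) := by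
    unfold noiseMeasure
    norm_num
  have hv : ((σ^2).toNNReal) ≠ 0 := by
    simp only [ne_eq, Real.toNNReal_eq_zero, not_le]
    positivity
  have hvcoe : (((σ^2).toNNReal : ℝ≥0) : ℝ) = σ^2 := Real.coe_toNNReal _ (sq_nonneg σ)
  set t : ℝ := (4 * σ^2 * (n:ℝ) * lam)⁻¹ with ht_def
  have ht : 0 < t := by positivity
  set a : ℝ := 9 * σ^2 * (M * (s:ℝ)) * lam * n with ha_def
  have ha0 : 0 ≤ a := by positivity
  have hta : t * a = 9 * (M * (s:ℝ)) / 4 := by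
    rw [ht_def, ha_def]
    field_simp
  set c : ℝ := Real.sqrt (2 * t) with hc_def
  have hc2 : c ^ 2 = 2 * t := Real.sq_sqrt (by positivity)
  -- Step A : Gaussian linearization of the square
  have stepA : ∀ w : Fin n → ℝ, ENNReal.ofReal (rexp (t * ∑ j, (Xᵀ.mulVec w j) ^ 2))
      = ∫⁻ g, ENNReal.ofReal (rexp (∑ j, (c * Xᵀ.mulVec w j) * g j)) ∂noiseMeasure s 1 := by
    intro w
    rw [hν]
    have hsplit : ∀ g : Fin s → ℝ, ENNReal.ofReal (rexp (∑ j, (c * Xᵀ.mulVec w j) * g j))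
        = ∏ j, ENNReal.ofReal (rexp ((c * Xᵀ.mulVec w j) * g j)) := by
      intro g
      rw [Real.exp_sum, ENNReal.ofReal_prod_of_nonneg fun j _ => (Real.exp_pos _).le]
    simp_rw [hsplit]
    rw [lintegral_pi_prod (gaussianReal 0 1)
      (fun j x => ENNReal.ofReal (rexp ((c * Xᵀ.mulVec w j) * x)))
      (fun j => ENNReal.measurable_ofReal.comp
        (Real.measurable_exp.comp (measurable_id.const_mul _)))]
    rw [Finset.prod_congr rfl fun j _ => gauss_lin 1 one_ne_zero (c * Xᵀ.mulVec w j)]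
    rw [← ENNReal.ofReal_prod_of_nonneg fun j _ => (Real.exp_pos _).le, ← Real.exp_sum]
    congr 1
    congr 1
    rw [Finset.mul_sum]
    refine Finset.sum_congr rfl fun j _ => ?_
    rw [NNReal.coe_one, one_mul, mul_pow, hc2]
    ring
  -- key integral bound
  have keyInt : ∫⁻ w, ENNReal.ofReal (rexp (t * ∑ j, (Xᵀ.mulVec w j) ^ 2)) ∂noiseMeasure n σ
      ≤ ENNReal.ofReal (Real.sqrt 2 ^ s) := by
    have hFm : Measurable fun p : (Fin n → ℝ) × (Fin s → ℝ) =>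
        ENNReal.ofReal (rexp (∑ j, (c * Xᵀ.mulVec p.1 j) * p.2 j)) := by
      refine ENNReal.measurable_ofReal.comp (Real.measurable_exp.comp ?_)
      refine Finset.measurable_sum _ fun j _ => ?_
      exact (((hYm j).comp measurable_fst).const_mul c).mul
        ((measurable_pi_apply j).comp measurable_snd)
    calc ∫⁻ w, ENNReal.ofReal (rexp (t * ∑ j, (Xᵀ.mulVec w j) ^ 2)) ∂noiseMeasure n σ
        = ∫⁻ w, ∫⁻ g, ENNReal.ofReal (rexp (∑ j, (c * Xᵀ.mulVec w j) * g j)) ∂noiseMeasure s 1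
            ∂noiseMeasure n σ := lintegral_congr stepA
      _ = ∫⁻ g, ∫⁻ w, ENNReal.ofReal (rexp (∑ j, (c * Xᵀ.mulVec w j) * g j)) ∂noiseMeasure n σ
            ∂noiseMeasure s 1 := lintegral_lintegral_swap hFm.aemeasurable
      _ = ∫⁻ g, ENNReal.ofReal (rexp (t * σ^2 * ∑ i, (X.mulVec g i) ^ 2)) ∂noiseMeasure s 1 := by
          refine lintegral_congr fun g => ?_
          simp_rw [sum_mulVec_swap X c _ g]
          have hsplit : ∀ w : Fin n → ℝ, ENNReal.ofReal (rexp (∑ i, (c * X.mulVec g i) * w i))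
              = ∏ i, ENNReal.ofReal (rexp ((c * X.mulVec g i) * w i)) := fun w => by
            rw [Real.exp_sum, ENNReal.ofReal_prod_of_nonneg fun i _ => (Real.exp_pos _).le]
          simp_rw [hsplit]
          rw [show noiseMeasure n σ
              = Measure.pi (fun _ : Fin n => gaussianReal 0 (σ^2).toNNReal) from rfl,
            lintegral_pi_prod (gaussianReal 0 (σ^2).toNNReal)
              (fun i x => ENNReal.ofReal (rexp ((c * X.mulVec g i) * x)))
              (fun i => ENNReal.measurable_ofReal.comp
                (Real.measurable_exp.comp (measurable_id.const_mul _)))]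
          rw [Finset.prod_congr rfl fun i _ => gauss_lin _ hv (c * X.mulVec g i)]
          rw [← ENNReal.ofReal_prod_of_nonneg fun i _ => (Real.exp_pos _).le, ← Real.exp_sum]
          congr 1
          congr 1
          rw [Finset.mul_sum]
          refine Finset.sum_congr rfl fun i _ => ?_
          rw [hvcoe, mul_pow, hc2]
          ring
      _ ≤ ∫⁻ g, ENNReal.ofReal (rexp (4⁻¹ * ∑ j, (g j) ^ 2)) ∂noiseMeasure s 1 := by
          refine lintegral_mono fun g => ?_
          refine ENNReal.ofReal_le_ofReal (Real.exp_le_exp.2 ?_)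
          have hb := Xg_bound hn X g
          have h14 : t * σ^2 * ((n:ℝ) * lam) = 4⁻¹ := by
            rw [ht_def]; field_simp
          calc t * σ^2 * ∑ i, (X.mulVec g i) ^ 2
              ≤ t * σ^2 * ((n:ℝ) * lam * ∑ j, (g j) ^ 2) := by
                refine mul_le_mul_of_nonneg_left ?_ (by positivity)
                rw [hlam_def]
                simpa [mul_assoc] using hb
            _ = 4⁻¹ * ∑ j, (g j) ^ 2 := by rw [← h14]; ring
      _ = ENNReal.ofReal (Real.sqrt 2) ^ s := by
          rw [hν]
          have hsplit : ∀ g : Fin s → ℝ, ENNReal.ofReal (rexp (4⁻¹ * ∑ j, (g j) ^ 2))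
              = ∏ j, ENNReal.ofReal (rexp (4⁻¹ * (g j) ^ 2)) := fun g => by
            rw [Finset.mul_sum, Real.exp_sum,
              ENNReal.ofReal_prod_of_nonneg fun j _ => (Real.exp_pos _).le]
          simp_rw [hsplit]
          rw [lintegral_pi_prod (gaussianReal 0 1)
            (fun j x => ENNReal.ofReal (rexp (4⁻¹ * x ^ 2)))
            (fun j => ENNReal.measurable_ofReal.comp
              (Real.measurable_exp.comp ((measurable_id.pow_const 2).const_mul _)))]
          rw [Finset.prod_congr rfl fun j _ => gauss_sq]
          rw [Finset.prod_const, Finset.card_univ, Fintype.card_fin]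
      _ = ENNReal.ofReal (Real.sqrt 2 ^ s) := (ENNReal.ofReal_pow (Real.sqrt_nonneg 2) s).symm
  -- Markov / Chernoff
  have markov : noiseMeasure n σ {w | a ≤ ∑ j, (Xᵀ.mulVec w j) ^ 2}
      ≤ ENNReal.ofReal (rexp (-(M * (s:ℝ)))) := by
    have hfm : AEMeasurable (fun w : Fin n → ℝ =>
        ENNReal.ofReal (rexp (t * ∑ j, (Xᵀ.mulVec w j) ^ 2))) (noiseMeasure n σ) :=
      (ENNReal.measurable_ofReal.comp
        (Real.measurable_exp.comp (hQm.const_mul t))).aemeasurable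
    have h1 := mul_meas_ge_le_lintegral₀ hfm (ENNReal.ofReal (rexp (t * a)))
    have hsub : {w : Fin n → ℝ | a ≤ ∑ j, (Xᵀ.mulVec w j) ^ 2} ⊆
        {w : Fin n → ℝ | ENNReal.ofReal (rexp (t * a))
          ≤ ENNReal.ofReal (rexp (t * ∑ j, (Xᵀ.mulVec w j) ^ 2))} :=
      fun w hw => ENNReal.ofReal_le_ofReal (Real.exp_le_exp.2
        (mul_le_mul_of_nonneg_left hw ht.le))
    have h2 : ENNReal.ofReal (rexp (t * a)) *
        noiseMeasure n σ {w : Fin n → ℝ | a ≤ ∑ j, (Xᵀ.mulVec w j) ^ 2}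
        ≤ ENNReal.ofReal (Real.sqrt 2 ^ s) :=
      le_trans (mul_le_mul_right (measure_mono hsub) _) (le_trans h1 keyInt)
    have hne : ENNReal.ofReal (rexp (t * a)) ≠ 0 := (ENNReal.ofReal_pos.2 (Real.exp_pos _)).ne'
    rw [mul_comm] at h2
    rw [← ENNReal.le_div_iff_mul_le (Or.inl hne) (Or.inl ENNReal.ofReal_ne_top)] at h2
    refine le_trans h2 ?_
    rw [← ENNReal.ofReal_div_of_pos (Real.exp_pos _)]
    refine ENNReal.ofReal_le_ofReal ?_
    rw [div_eq_mul_inv, ← Real.exp_neg, hta]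
    have hs2 : Real.sqrt 2 ≤ rexp (5 * M / 4) := by
      have ha1 : Real.sqrt 2 ≤ 2 := by
        nlinarith [Real.sq_sqrt (by norm_num : (0:ℝ) ≤ 2), Real.sqrt_nonneg 2]
      have ha2 : (2:ℝ) ≤ rexp 1 := by
        have := Real.add_one_le_exp 1
        linarith
      have ha3 : rexp 1 ≤ rexp (5 * M / 4) := Real.exp_le_exp.2 (by linarith)
      linarith
    calc Real.sqrt 2 ^ s * rexp (-(9 * (M * (s:ℝ)) / 4))
        ≤ rexp (5 * M / 4) ^ s * rexp (-(9 * (M * (s:ℝ)) / 4)) :=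
          mul_le_mul_of_nonneg_right (pow_le_pow_left₀ (Real.sqrt_nonneg 2) hs2 s)
            (Real.exp_nonneg _)
      _ = rexp ((s:ℝ) * (5 * M / 4) + -(9 * (M * (s:ℝ)) / 4)) := by
          rw [← Real.exp_nat_mul, ← Real.exp_add]
      _ = rexp (-(M * (s:ℝ))) := by congr 1; ring
  -- conclusion
  have hthr : (n:ℝ)⁻¹ * Real.sqrt a = 3 * σ * Real.sqrt (M * (s:ℝ) * lam / (n:ℝ)) := by
    have ha' : a = (3 * σ) ^ 2 * (M * (s:ℝ) * lam / (n:ℝ)) * (n:ℝ) ^ 2 := by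
      rw [ha_def]; field_simp; ring
    rw [ha', Real.sqrt_mul (by positivity), Real.sqrt_sq hnR.le,
      Real.sqrt_mul (by positivity), Real.sqrt_sq (by positivity)]
    field_simp
  have hsub2 : {w : Fin n → ℝ | ∑ j, (Xᵀ.mulVec w j) ^ 2 ≤ a} ⊆
      {w : Fin n → ℝ | (n : ℝ)⁻¹ * nrm2 (Xᵀ.mulVec w) ≤
        3 * σ * Real.sqrt (M * (s : ℝ) * lam / (n : ℝ))} := by
    intro w hw
    have : nrm2 (Xᵀ.mulVec w) ≤ Real.sqrt a := by
      rw [nrm2]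
      exact Real.sqrt_le_sqrt hw
    calc (n : ℝ)⁻¹ * nrm2 (Xᵀ.mulVec w) ≤ (n : ℝ)⁻¹ * Real.sqrt a :=
          mul_le_mul_of_nonneg_left this (by positivity)
      _ = _ := hthr
  have hGc : noiseMeasure n σ ({w : Fin n → ℝ | ∑ j, (Xᵀ.mulVec w j) ^ 2 ≤ a}ᶜ)
      ≤ ENNReal.ofReal (rexp (-(M * (s:ℝ)))) := by
    refine le_trans (measure_mono ?_) markov
    intro w hw
    simp only [Set.mem_compl_iff, Set.mem_setOf_eq, not_le] at hw
    exact hw.le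
  have hunion : (1:ℝ≥0∞) ≤ noiseMeasure n σ {w : Fin n → ℝ | ∑ j, (Xᵀ.mulVec w j) ^ 2 ≤ a}
      + noiseMeasure n σ ({w : Fin n → ℝ | ∑ j, (Xᵀ.mulVec w j) ^ 2 ≤ a}ᶜ) := by
    rw [← measure_univ (μ := noiseMeasure n σ), ← Set.union_compl_self
      {w : Fin n → ℝ | ∑ j, (Xᵀ.mulVec w j) ^ 2 ≤ a}]
    exact measure_union_le _ _
  calc ENNReal.ofReal (1 - rexp (-(M * (s:ℝ))))
      = 1 - ENNReal.ofReal (rexp (-(M * (s:ℝ)))) := by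
        rw [ENNReal.ofReal_sub _ (Real.exp_nonneg _), ENNReal.ofReal_one]
    _ ≤ 1 - noiseMeasure n σ ({w : Fin n → ℝ | ∑ j, (Xᵀ.mulVec w j) ^ 2 ≤ a}ᶜ) :=
        tsub_le_tsub_left hGc 1
    _ ≤ noiseMeasure n σ {w : Fin n → ℝ | ∑ j, (Xᵀ.mulVec w j) ^ 2 ≤ a} := by
        rw [tsub_le_iff_right]
        exact hunion
    _ ≤ _ := measure_mono hsub2
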